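/- The Hellinger distance d_H(Φ, Ψ) := inf{ ‖W_Ψ − W_Φ‖₂ : W_Φ, W_Ψ ∈ L₂^{m×m}(𝕋), W_Φ W_Φ* = Φ, W_Ψ W_Ψ* = Ψ } defines a metric on the set of bounded coercive m×m spectral densities on the unit circle. -/

import Mathlib

open Matrix MeasureTheory
open scoped ComplexOrder

/-- Normalized Lebesgue measure dθ/2π on one period, modeling the unit circle. -/
noncomputable def muT : Measure ℝ :=
  (ENNReal.ofReal (2 * Real.pi)⁻¹) • (volume.restrict (Set.Ioc 0 (2 * Real.pi)))

/-- Bounded coercive Hermitian-valued spectral density on the circle. -/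
def IsSpecDens {m : ℕ} (Φ : ℝ → Matrix (Fin m) (Fin m) ℂ) : Prop :=
  (∀ i j, Measurable fun θ => Φ θ i j) ∧ Function.Periodic Φ (2 * Real.pi) ∧
  (∀ θ, (Φ θ).IsHermitian) ∧ (∃ C : ℝ, ∀ θ i j, ‖Φ θ i j‖ ≤ C) ∧
  (∃ c : ℝ, 0 < c ∧ ∀ θ, ((Φ θ) - c • (1 : Matrix (Fin m) (Fin m) ℂ)).PosSemidef)

/-- W is a square spectral factor of Φ lying in L₂^{m×m}(𝕋). -/
def IsFactor {m : ℕ} (W Φ : ℝ → Matrix (Fin m) (Fin m) ℂ) : Prop :=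
  (∀ i j, Measurable fun θ => W θ i j) ∧
  Integrable (fun θ => ((W θ) * (W θ)ᴴ).trace.re) muT ∧
  (∀ᵐ θ ∂muT, (W θ) * (W θ)ᴴ = Φ θ)

/-- The L₂ norm of a matrix-valued function: ‖W‖₂ = (tr ∫ W W*)^{1/2}. -/
noncomputable def normL2 {m : ℕ} (W : ℝ → Matrix (Fin m) (Fin m) ℂ) : ℝ :=
  Real.sqrt (∫ θ, ((W θ) * (W θ)ᴴ).trace.re ∂muT)

/-- The multivariable Hellinger distance. -/
noncomputable def dH {m : ℕ} (Φ Ψ : ℝ → Matrix (Fin m) (Fin m) ℂ) : ℝ :=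
  sInf {r : ℝ | ∃ WΦ WΨ, IsFactor WΦ Φ ∧ IsFactor WΨ Ψ ∧
    r = normL2 (fun θ => WΦ θ - WΨ θ)}

/-! ### Auxiliary material -/

open Polynomial Filter

section Newton

noncomputable def newt : ℕ → Polynomial ℝ
  | 0 => 0
  | (n+1) => newt n + Polynomial.C (1/2) * (Polynomial.X - (newt n)^2)

lemma newt_eval_succ (n : ℕ) (x : ℝ) :
    (newt (n+1)).eval x = (newt n).eval x + (x - ((newt n).eval x)^2)/2 := by
  simp [newt]; ring

lemma newt_bounds {x : ℝ} (hx0 : 0 ≤ x) (hx1 : x ≤ 1) (n : ℕ) :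
    0 ≤ (newt n).eval x ∧ (newt n).eval x ≤ Real.sqrt x := by
  induction n with
  | zero => simp [newt, Real.sqrt_nonneg]
  | succ n ih =>
    obtain ⟨h0, h1⟩ := ih
    have hs : Real.sqrt x ^ 2 = x := Real.sq_sqrt hx0
    have hs1 : Real.sqrt x ≤ 1 := Real.sqrt_le_one.mpr hx1
    have hq2 : ((newt n).eval x)^2 ≤ x := by nlinarith
    constructor
    · rw [newt_eval_succ]; nlinarith
    · rw [newt_eval_succ]; nlinarith [sq_nonneg (Real.sqrt x - (newt n).eval x)]

lemma newt_err {x : ℝ} (hx0 : 0 ≤ x) (hx1 : x ≤ 1) (n : ℕ) :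
    Real.sqrt x - (newt n).eval x ≤ Real.sqrt x * (1 - Real.sqrt x / 2)^n := by
  induction n with
  | zero => simp [newt]
  | succ n ih =>
    obtain ⟨h0, h1⟩ := newt_bounds hx0 hx1 n
    have hs : Real.sqrt x ^ 2 = x := Real.sq_sqrt hx0
    have hs1 : Real.sqrt x ≤ 1 := Real.sqrt_le_one.mpr hx1
    have hs0 : 0 ≤ Real.sqrt x := Real.sqrt_nonneg x
    set s := Real.sqrt x with hsdef
    set q := (newt n).eval x with hq
    have key : s - (newt (n+1)).eval x = (s - q) * (1 - (s + q)/2) := by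
      rw [newt_eval_succ, ← hq, ← hs]; ring
    rw [key, pow_succ]
    have h2 : (1 - (s + q)/2) ≤ 1 - s/2 := by linarith
    have h3 : 0 ≤ 1 - (s + q)/2 := by linarith
    have h4 : 0 ≤ s * (1 - s/2)^n := by
      apply mul_nonneg hs0 (pow_nonneg (by linarith) n)
    calc (s - q) * (1 - (s + q)/2) ≤ (s * (1 - s/2)^n) * (1 - s/2) :=
          mul_le_mul ih h2 h3 h4
      _ = s * ((1 - s/2)^n * (1 - s/2)) := by ring

lemma newt_tendsto {x : ℝ} (hx0 : 0 ≤ x) (hx1 : x ≤ 1) :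
    Tendsto (fun n => (newt n).eval x) atTop (nhds (Real.sqrt x)) := by
  have hbd := newt_bounds hx0 hx1
  have herr := newt_err hx0 hx1
  have hzero : Tendsto (fun n => Real.sqrt x - (newt n).eval x) atTop (nhds 0) := by
    apply squeeze_zero (fun n => by linarith [(hbd n).2]) herr
    rcases eq_or_lt_of_le hx0 with h | h
    · simp [← h]
    · have hs0 : 0 < Real.sqrt x := Real.sqrt_pos.mpr h
      have hs1 : Real.sqrt x ≤ 1 := Real.sqrt_le_one.mpr hx1
      have : Tendsto (fun n : ℕ => (1 - Real.sqrt x / 2)^n) atTop (nhds 0) := by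
        apply tendsto_pow_atTop_nhds_zero_of_lt_one (by linarith) (by linarith)
      simpa using this.const_mul (Real.sqrt x)
  have := (tendsto_const_nhds (x := Real.sqrt x) (f := atTop)).sub hzero
  simpa using this

/-- scaled polynomials converging to sqrt on `[0, B]` -/
noncomputable def sqPoly (B : ℝ) (n : ℕ) : Polynomial ℝ :=
  ((newt n).comp (Polynomial.C B⁻¹ * Polynomial.X)) * Polynomial.C (Real.sqrt B)

lemma sqPoly_eval (B : ℝ) (n : ℕ) (x : ℝ) :
    (sqPoly B n).eval x = (newt n).eval (B⁻¹ * x) * Real.sqrt B := by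
  simp [sqPoly]

lemma sqPoly_tendsto {B x : ℝ} (hB : 1 ≤ B) (hx0 : 0 ≤ x) (hxB : x ≤ B) :
    Tendsto (fun n => (sqPoly B n).eval x) atTop (nhds (Real.sqrt x)) := by
  have hB0 : (0:ℝ) < B := lt_of_lt_of_le one_pos hB
  have hy0 : 0 ≤ B⁻¹ * x := mul_nonneg (inv_nonneg.mpr hB0.le) hx0
  have hy1 : B⁻¹ * x ≤ 1 := by
    rw [inv_mul_le_iff₀ hB0]; simpa using hxB
  have h := (newt_tendsto hy0 hy1).mul_const (Real.sqrt B)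
  have heq : Real.sqrt (B⁻¹ * x) * Real.sqrt B = Real.sqrt x := by
    rw [← Real.sqrt_mul hy0]
    congr 1
    field_simp
  rw [heq] at h
  simpa [sqPoly_eval] using h

end Newton

section MatrixAux

variable {m : ℕ}

lemma aeval_conj (U D : Matrix (Fin m) (Fin m) ℂ) (h1 : U * star U = 1)
    (h2 : star U * U = 1) (p : Polynomial ℝ) :
    aeval (U * D * star U) p = U * aeval D p * star U := by
  induction p using Polynomial.induction_on with
  | C a =>
    simp only [aeval_C, Algebra.algebraMap_eq_smul_one]
    rw [mul_smul_comm, smul_mul_assoc, mul_one, h1]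
  | add p q hp hq =>
    simp [map_add, hp, hq, mul_add, add_mul]
  | monomial k a ih =>
    have e : ∀ M : Matrix (Fin m) (Fin m) ℂ,
        aeval M (Polynomial.C a * Polynomial.X ^ (k+1))
          = aeval M (Polynomial.C a * Polynomial.X ^ k) * M := by
      intro M
      simp [pow_succ, mul_assoc]
    rw [e, e, ih]
    have : star U * (U * (D * star U)) = D * star U := by
      rw [← mul_assoc, h2, one_mul]
    calc U * aeval D (Polynomial.C a * Polynomial.X ^ k) * star U * (U * D * star U)
        = U * (aeval D (Polynomial.C a * Polynomial.X ^ k) * (star U * (U * (D * star U)))) := by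
          simp only [mul_assoc]
      _ = U * (aeval D (Polynomial.C a * Polynomial.X ^ k) * D) * star U := by
          rw [this]; simp [mul_assoc]

lemma aeval_diagonal (d : Fin m → ℂ) (p : Polynomial ℝ) :
    aeval (Matrix.diagonal d) p = Matrix.diagonal (fun i => aeval (d i) p) := by
  have h1 : aeval ((Matrix.diagonalAlgHom ℝ) d) p
      = (Matrix.diagonalAlgHom ℝ) (aeval d p) := aeval_algHom_apply _ d p
  have h2 : ∀ i, aeval d p i = aeval (d i) p := by
    intro i
    exact (aeval_algHom_apply (Pi.evalAlgHom ℝ (fun _ : Fin m => ℂ) i) d p).symm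
  rw [← funext h2]; exact h1

lemma aeval_ofReal (x : ℝ) (p : Polynomial ℝ) :
    aeval (x : ℂ) p = ((p.eval x : ℝ) : ℂ) :=
  aeval_algebraMap_apply_eq_algebraMap_eval x p

lemma measurable_aeval_entry {A : ℝ → Matrix (Fin m) (Fin m) ℂ}
    (hA : ∀ i j, Measurable fun θ => A θ i j) (p : Polynomial ℝ) (i j : Fin m) :
    Measurable fun θ => (aeval (A θ) p) i j := by
  have hpow : ∀ (k : ℕ) (i j : Fin m), Measurable fun θ => (A θ ^ k) i j := by
    intro k
    induction k with
    | zero =>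
      intro i j
      simp only [pow_zero]
      exact measurable_const
    | succ k ih =>
      intro i j
      simp only [pow_succ, Matrix.mul_apply]
      exact Finset.measurable_sum _ fun l _ => (ih i l).mul (hA l j)
  have : ∀ θ, aeval (A θ) p
      = ∑ k ∈ Finset.range (p.natDegree + 1), p.coeff k • (A θ) ^ k := by
    intro θ; exact aeval_eq_sum_range (A θ)
  simp only [this, Matrix.sum_apply]
  refine Finset.measurable_sum _ fun k _ => ?_
  simpa [Matrix.smul_apply, Complex.real_smul] using (hpow k i j).const_mul _

lemma aeval_spectral {A : Matrix (Fin m) (Fin m) ℂ} (hA : A.PosSemidef) (p : Polynomial ℝ) :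
    aeval A p = (hA.1.eigenvectorUnitary : Matrix (Fin m) (Fin m) ℂ) *
      Matrix.diagonal (fun i => ((p.eval (hA.1.eigenvalues i) : ℝ) : ℂ)) *
      star (hA.1.eigenvectorUnitary : Matrix (Fin m) (Fin m) ℂ) := by
  set U := (hA.1.eigenvectorUnitary : Matrix (Fin m) (Fin m) ℂ)
  have h1 : U * star U = 1 := Matrix.mem_unitaryGroup_iff.mp hA.1.eigenvectorUnitary.2
  have h2 : star U * U = 1 := Matrix.mem_unitaryGroup_iff'.mp hA.1.eigenvectorUnitary.2
  have hspec : A = U * Matrix.diagonal (RCLike.ofReal ∘ hA.1.eigenvalues) * star U := by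
    have h := hA.1.spectral_theorem
    simpa only [Unitary.conjStarAlgAut_apply, Unitary.coe_star] using h
  conv_lhs => rw [hspec]
  rw [aeval_conj _ _ h1 h2, aeval_diagonal]
  have hfun : ∀ i : Fin m, aeval ((RCLike.ofReal ∘ hA.1.eigenvalues) i : ℂ) p
      = ((p.eval (hA.1.eigenvalues i) : ℝ) : ℂ) := fun i => aeval_ofReal _ p
  simp only [hfun]

noncomputable def psdSqrt {A : Matrix (Fin m) (Fin m) ℂ} (hA : A.PosSemidef) :
    Matrix (Fin m) (Fin m) ℂ :=
  (hA.1.eigenvectorUnitary : Matrix (Fin m) (Fin m) ℂ) *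
    Matrix.diagonal (fun i => ((Real.sqrt (hA.1.eigenvalues i) : ℝ) : ℂ)) *
    star (hA.1.eigenvectorUnitary : Matrix (Fin m) (Fin m) ℂ)

lemma psdSqrt_conjTranspose {A : Matrix (Fin m) (Fin m) ℂ} (hA : A.PosSemidef) :
    (psdSqrt hA)ᴴ = psdSqrt hA := by
  simp [psdSqrt, Matrix.conjTranspose_mul, Matrix.mul_assoc, Matrix.star_eq_conjTranspose,
    Matrix.diagonal_conjTranspose, Pi.star_def, Complex.star_def, Complex.conj_ofReal]

lemma psdSqrt_mul_self {A : Matrix (Fin m) (Fin m) ℂ} (hA : A.PosSemidef) :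
    psdSqrt hA * psdSqrt hA = A := by
  set U := (hA.1.eigenvectorUnitary : Matrix (Fin m) (Fin m) ℂ)
  have h2 : star U * U = 1 := Matrix.mem_unitaryGroup_iff'.mp hA.1.eigenvectorUnitary.2
  have hspec : A = U * Matrix.diagonal (RCLike.ofReal ∘ hA.1.eigenvalues) * star U := by
    have h := hA.1.spectral_theorem
    simpa only [Unitary.conjStarAlgAut_apply, Unitary.coe_star] using h
  calc psdSqrt hA * psdSqrt hA
      = U * (Matrix.diagonal (fun i => ((Real.sqrt (hA.1.eigenvalues i) : ℝ) : ℂ)) * (star U * U)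
          * Matrix.diagonal (fun i => ((Real.sqrt (hA.1.eigenvalues i) : ℝ) : ℂ))) * star U := by
        simp only [psdSqrt, U, Matrix.mul_assoc]
    _ = U * Matrix.diagonal (RCLike.ofReal ∘ hA.1.eigenvalues) * star U := by
        rw [h2, Matrix.mul_one, Matrix.diagonal_mul_diagonal]
        congr 3
        funext i
        simp [← Complex.ofReal_mul, Real.mul_self_sqrt (hA.eigenvalues_nonneg i)]
    _ = A := hspec.symm

lemma tendsto_aeval_sqrt {A : Matrix (Fin m) (Fin m) ℂ} (hA : A.PosSemidef) {B : ℝ}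
    (hB : 1 ≤ B) (hev : ∀ i, hA.1.eigenvalues i ≤ B) (i j : Fin m) :
    Tendsto (fun n => (aeval A (sqPoly B n)) i j) atTop (nhds (psdSqrt hA i j)) := by
  set U := (hA.1.eigenvectorUnitary : Matrix (Fin m) (Fin m) ℂ)
  have hentry : ∀ (d : Fin m → ℂ), (U * Matrix.diagonal d * star U) i j
      = ∑ k, U i k * d k * star U k j := by
    intro d
    rw [Matrix.mul_apply]
    refine Finset.sum_congr rfl fun x _ => ?_
    rw [Matrix.mul_diagonal]
  have hsqrt : psdSqrt hA i j
      = ∑ k, U i k * ((Real.sqrt (hA.1.eigenvalues k) : ℝ) : ℂ) * star U k j := by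
    rw [psdSqrt]
    exact hentry _
  simp only [aeval_spectral hA, hentry, hsqrt]
  apply tendsto_finset_sum
  intro k _
  have : Tendsto (fun n => (((sqPoly B n).eval (hA.1.eigenvalues k) : ℝ) : ℂ)) atTop
      (nhds ((Real.sqrt (hA.1.eigenvalues k) : ℝ) : ℂ)) := by
    exact (Complex.continuous_ofReal.continuousAt).tendsto.comp
      (sqPoly_tendsto hB (hA.eigenvalues_nonneg k) (hev k))
  exact Tendsto.congr (fun n => by simp only [Matrix.mul_diagonal]; rfl)
    ((this.const_mul (U i k)).mul_const (star U k j))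

lemma eigenvalues_le_trace {A : Matrix (Fin m) (Fin m) ℂ} (hA : A.PosSemidef) (i : Fin m) :
    hA.1.eigenvalues i ≤ A.trace.re := by
  set U := (hA.1.eigenvectorUnitary : Matrix (Fin m) (Fin m) ℂ)
  have h2 : star U * U = 1 := Matrix.mem_unitaryGroup_iff'.mp hA.1.eigenvectorUnitary.2
  have htr : A.trace = ∑ j, ((hA.1.eigenvalues j : ℝ) : ℂ) := by
    conv_lhs => rw [hA.1.spectral_theorem]
    rw [Unitary.conjStarAlgAut_apply, Matrix.trace_mul_cycle, Unitary.coe_star_mul_self, one_mul,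
      Matrix.trace_diagonal]
    rfl
  have hre : A.trace.re = ∑ j, hA.1.eigenvalues j := by
    rw [htr]
    simp [Complex.re_sum]
  rw [hre]
  exact Finset.single_le_sum (fun j _ => hA.eigenvalues_nonneg j) (Finset.mem_univ i)

lemma trace_re_le_of_bounded {A : Matrix (Fin m) (Fin m) ℂ} {C : ℝ}
    (hC : ∀ i j, ‖A i j‖ ≤ C) : A.trace.re ≤ m * C := by
  have : A.trace.re = ∑ i, (A i i).re := by
    simp [Matrix.trace, Complex.re_sum]
  rw [this]
  calc ∑ i, (A i i).re ≤ ∑ i : Fin m, C := by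
        apply Finset.sum_le_sum
        intro i _
        exact le_trans (Complex.re_le_norm _) (hC i i)
    _ = m * C := by simp [mul_comm]

lemma measurable_det {A : ℝ → Matrix (Fin m) (Fin m) ℂ}
    (hA : ∀ i j, Measurable fun θ => A θ i j) :
    Measurable fun θ => (A θ).det := by
  simp only [Matrix.det_apply']
  apply Finset.measurable_sum
  intro σ _
  exact (Finset.measurable_prod _ fun i _ => hA _ _).const_mul _

lemma measurable_inv_entry {A : ℝ → Matrix (Fin m) (Fin m) ℂ}
    (hA : ∀ i j, Measurable fun θ => A θ i j) (i j : Fin m) :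
    Measurable fun θ => (A θ)⁻¹ i j := by
  have h : ∀ θ, (A θ)⁻¹ i j = ((A θ).det)⁻¹ * (A θ).adjugate i j := by
    intro θ
    rw [Matrix.inv_def, Matrix.smul_apply, Ring.inverse_eq_inv', smul_eq_mul]
  simp only [h, Matrix.adjugate_apply]
  apply Measurable.mul
  · exact (measurable_det hA).inv
  · apply measurable_det
    intro a b
    by_cases haj : a = j
    · simp [Matrix.updateRow_apply, haj]
    · simp only [Matrix.updateRow_apply, haj, if_false]
      exact hA a b

lemma measurable_mul_entry {A B : ℝ → Matrix (Fin m) (Fin m) ℂ}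
    (hA : ∀ i j, Measurable fun θ => A θ i j) (hB : ∀ i j, Measurable fun θ => B θ i j)
    (i j : Fin m) : Measurable fun θ => (A θ * B θ) i j := by
  simp only [Matrix.mul_apply]
  exact Finset.measurable_sum _ fun l _ => (hA i l).mul (hB l j)

end MatrixAux

section MeasureAux

instance : IsFiniteMeasure muT := by
  constructor
  rw [muT, Measure.smul_apply, Measure.restrict_apply_univ, Real.volume_Ioc, smul_eq_mul]
  exact ENNReal.mul_lt_top ENNReal.ofReal_lt_top ENNReal.ofReal_lt_top

lemma integrable_of_bounded {f : ℝ → ℝ} (hm : Measurable f) {C : ℝ}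
    (h : ∀ θ, |f θ| ≤ C) : Integrable f muT := by
  refine Integrable.mono' (integrable_const C) hm.aestronglyMeasurable ?_
  exact Filter.Eventually.of_forall (fun θ => by simpa using h θ)

end MeasureAux

section SpecDens

variable {m : ℕ}

lemma specDens_posDef {Φ : ℝ → Matrix (Fin m) (Fin m) ℂ} (hΦ : IsSpecDens Φ) (θ : ℝ) :
    (Φ θ).PosDef := by
  obtain ⟨c, hc, h⟩ := hΦ.2.2.2.2
  refine Matrix.PosDef.of_dotProduct_mulVec_pos (hΦ.2.2.1 θ) (fun x hx => ?_)
  have hdec : Φ θ = (Φ θ - c • 1) + c • (1 : Matrix (Fin m) (Fin m) ℂ) := by abel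
  have h1 : star x ⬝ᵥ (Φ θ) *ᵥ x
      = star x ⬝ᵥ ((Φ θ - c • 1) *ᵥ x) + star x ⬝ᵥ ((c • (1 : Matrix (Fin m) (Fin m) ℂ)) *ᵥ x) := by
    conv_lhs => rw [hdec]
    rw [Matrix.add_mulVec, dotProduct_add]
  have h2 : (c • (1 : Matrix (Fin m) (Fin m) ℂ)) *ᵥ x = c • x := by
    rw [Matrix.smul_mulVec, Matrix.one_mulVec]
  have h3 : (0:ℂ) < star x ⬝ᵥ (c • x) := by
    rw [dotProduct_smul]
    have hpos : (0:ℂ) < star x ⬝ᵥ x := Matrix.dotProduct_star_self_pos_iff.mpr hx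
    have hcc : (0:ℂ) < (c:ℂ) := by exact_mod_cast hc
    calc (0:ℂ) = (c:ℂ) * 0 := by ring
      _ < (c:ℂ) * (star x ⬝ᵥ x) := by
        apply mul_lt_mul_of_pos_left hpos hcc
      _ = c • (star x ⬝ᵥ x) := by simp [Complex.real_smul]
  rw [h1, h2]
  exact lt_add_of_nonneg_of_lt ((h θ).dotProduct_mulVec_nonneg x) h3

lemma trace_re_meas {Φ : ℝ → Matrix (Fin m) (Fin m) ℂ}
    (hΦ : ∀ i j, Measurable fun θ => Φ θ i j) :
    Measurable fun θ => (Φ θ).trace.re := by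
  have : ∀ θ, (Φ θ).trace.re = ∑ i, ((Φ θ) i i).re := by
    intro θ; simp [Matrix.trace, Complex.re_sum]
  simp only [this]
  exact Finset.measurable_sum _ fun i _ => (Complex.measurable_re.comp (hΦ i i))

lemma trace_re_nonneg {Φ : ℝ → Matrix (Fin m) (Fin m) ℂ} (hΦ : IsSpecDens Φ) (θ : ℝ) :
    0 ≤ (Φ θ).trace.re := by
  have hpsd := (specDens_posDef hΦ θ).posSemidef
  have h0 : ∀ i : Fin m, 0 ≤ ((Φ θ) i i).re := by
    intro i
    have h := hpsd.re_dotProduct_nonneg (Pi.single i 1)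
    simpa [dotProduct, Pi.single_apply, star, apply_ite Complex.re,
      apply_ite Complex.im, ite_mul, Finset.sum_ite_eq'] using h
  have : (Φ θ).trace.re = ∑ i, ((Φ θ) i i).re := by
    simp [Matrix.trace, Complex.re_sum]
  rw [this]
  exact Finset.sum_nonneg fun i _ => h0 i

lemma trace_re_integrable {Φ : ℝ → Matrix (Fin m) (Fin m) ℂ} (hΦ : IsSpecDens Φ) :
    Integrable (fun θ => (Φ θ).trace.re) muT := by
  obtain ⟨C, hC⟩ := hΦ.2.2.2.1
  apply integrable_of_bounded (trace_re_meas hΦ.1) (C := m * C)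
  intro θ
  rw [abs_of_nonneg (trace_re_nonneg hΦ θ)]
  exact trace_re_le_of_bounded (hC θ)

lemma exists_factor {Φ : ℝ → Matrix (Fin m) (Fin m) ℂ} (hΦ : IsSpecDens Φ) :
    ∃ W, IsFactor W Φ ∧ ∀ θ, (W θ) * (W θ)ᴴ = Φ θ := by
  have hpd : ∀ θ, (Φ θ).PosDef := specDens_posDef hΦ
  have hpsd : ∀ θ, (Φ θ).PosSemidef := fun θ => (hpd θ).posSemidef
  obtain ⟨C, hC⟩ := hΦ.2.2.2.1
  set W : ℝ → Matrix (Fin m) (Fin m) ℂ := fun θ => psdSqrt (hpsd θ) with hW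
  have hmul : ∀ θ, (W θ) * (W θ)ᴴ = Φ θ := by
    intro θ
    have hh : (W θ)ᴴ = W θ := psdSqrt_conjTranspose (hpsd θ)
    rw [hh]
    exact psdSqrt_mul_self (hpsd θ)
  have htrace_int : Integrable (fun θ => ((W θ) * (W θ)ᴴ).trace.re) muT := by
    have : (fun θ => ((W θ) * (W θ)ᴴ).trace.re) = fun θ => (Φ θ).trace.re := by
      funext θ; rw [hmul θ]
    rw [this]
    exact trace_re_integrable hΦ
  set B : ℝ := max (m * C) 1 with hBdef
  have hB : 1 ≤ B := le_max_right _ _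
  have hev : ∀ θ i, ((hpsd θ).1.eigenvalues i) ≤ B := by
    intro θ i
    exact le_trans (le_trans (eigenvalues_le_trace (hpsd θ) i)
      (trace_re_le_of_bounded (hC θ))) (le_max_left _ _)
  have hmeas : ∀ i j, Measurable fun θ => W θ i j := by
    intro i j
    apply measurable_of_tendsto_metrizable
      (f := fun n θ => (aeval (Φ θ) (sqPoly B n)) i j)
      (fun n => measurable_aeval_entry hΦ.1 (sqPoly B n) i j)
    rw [tendsto_pi_nhds]
    intro θ
    exact tendsto_aeval_sqrt (hpsd θ) hB (hev θ) i j
  exact ⟨W, ⟨hmeas, htrace_int, Filter.Eventually.of_forall hmul⟩, hmul⟩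

end SpecDens

section L2Aux

variable {m : ℕ}

noncomputable def emb (W : ℝ → Matrix (Fin m) (Fin m) ℂ) :
    ℝ → EuclideanSpace ℂ (Fin m × Fin m) :=
  fun θ => (WithLp.equiv 2 _).symm (fun p => W θ p.1 p.2)

lemma emb_apply (W : ℝ → Matrix (Fin m) (Fin m) ℂ) (θ : ℝ) (p : Fin m × Fin m) :
    emb W θ p = W θ p.1 p.2 :=
  rfl

lemma emb_sub (A B : ℝ → Matrix (Fin m) (Fin m) ℂ) :
    emb (fun θ => A θ - B θ) = emb A - emb B := by
  funext θ
  apply PiLp.ext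
  intro p
  simp [emb_apply, Matrix.sub_apply, PiLp.sub_apply]

lemma norm_emb_sq (W : ℝ → Matrix (Fin m) (Fin m) ℂ) (θ : ℝ) :
    ‖emb W θ‖^2 = ((W θ) * (W θ)ᴴ).trace.re := by
  rw [EuclideanSpace.norm_eq, Real.sq_sqrt (by positivity)]
  have h1 : ∑ p : Fin m × Fin m, ‖emb W θ p‖^2 = ∑ i, ∑ k, Complex.normSq (W θ i k) := by
    rw [Fintype.sum_prod_type]
    simp [emb_apply, Complex.sq_norm]
  have h2 : ((W θ) * (W θ)ᴴ).trace.re = ∑ i, ∑ k, Complex.normSq (W θ i k) := by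
    simp [Matrix.trace, Matrix.mul_apply, Matrix.conjTranspose_apply, Complex.re_sum,
      Matrix.diag, RCLike.star_def, Complex.mul_conj]
  rw [h1, h2]

lemma aestronglyMeasurable_emb {W : ℝ → Matrix (Fin m) (Fin m) ℂ}
    (hm : ∀ i j, Measurable fun θ => W θ i j) : AEStronglyMeasurable (emb W) muT := by
  have h : Measurable (fun θ => (fun p : Fin m × Fin m => W θ p.1 p.2)) :=
    measurable_pi_lambda _ fun p => hm p.1 p.2
  exact ((PiLp.continuousLinearEquiv 2 ℂ
    (fun _ : Fin m × Fin m => ℂ)).symm.continuous.comp_stronglyMeasurable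
    h.stronglyMeasurable).aestronglyMeasurable

lemma memLp_emb {W : ℝ → Matrix (Fin m) (Fin m) ℂ}
    (hm : ∀ i j, Measurable fun θ => W θ i j)
    (hint : Integrable (fun θ => ((W θ) * (W θ)ᴴ).trace.re) muT) :
    MemLp (emb W) 2 muT := by
  rw [memLp_two_iff_integrable_sq_norm (aestronglyMeasurable_emb hm)]
  exact hint.congr (Filter.Eventually.of_forall fun θ => (norm_emb_sq W θ).symm)

lemma memLp_emb_factor {W Φ : ℝ → Matrix (Fin m) (Fin m) ℂ} (hW : IsFactor W Φ) :
    MemLp (emb W) 2 muT :=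
  memLp_emb hW.1 hW.2.1

lemma normL2_eq_norm_toLp {W : ℝ → Matrix (Fin m) (Fin m) ℂ}
    (hf : MemLp (emb W) 2 muT) :
    normL2 W = ‖hf.toLp (emb W)‖ := by
  have h1 : (‖hf.toLp (emb W)‖ : ℝ)^2 = ∫ θ, ‖emb W θ‖^2 ∂muT := by
    rw [← inner_self_eq_norm_sq (𝕜 := ℂ), MeasureTheory.L2.inner_def,
      ← integral_re (MeasureTheory.L2.integrable_inner _ _)]
    apply integral_congr_ae
    filter_upwards [hf.coeFn_toLp] with θ hθ
    rw [hθ, inner_self_eq_norm_sq (𝕜 := ℂ)]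
  have h2 : ∫ θ, ((W θ) * (W θ)ᴴ).trace.re ∂muT = ∫ θ, ‖emb W θ‖^2 ∂muT :=
    integral_congr_ae (Filter.Eventually.of_forall fun θ => (norm_emb_sq W θ).symm)
  rw [normL2, h2, ← h1, Real.sqrt_sq (norm_nonneg _)]

lemma norm_toLp_real {f : ℝ → ℝ} (hf : MemLp f 2 muT) :
    ‖hf.toLp f‖ = Real.sqrt (∫ θ, (f θ)^2 ∂muT) := by
  have h1 : (‖hf.toLp f‖)^2 = ∫ θ, (f θ)^2 ∂muT := by
    rw [← real_inner_self_eq_norm_sq, MeasureTheory.L2.inner_def]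
    apply integral_congr_ae
    filter_upwards [hf.coeFn_toLp] with θ hθ
    rw [hθ]
    simp [RCLike.inner_apply, sq]
  rw [← h1, Real.sqrt_sq (norm_nonneg _)]

lemma integral_mul_le_CS {f g : ℝ → ℝ} (hf : MemLp f 2 muT) (hg : MemLp g 2 muT) :
    ∫ θ, f θ * g θ ∂muT
      ≤ Real.sqrt (∫ θ, (f θ)^2 ∂muT) * Real.sqrt (∫ θ, (g θ)^2 ∂muT) := by
  have h1 : ∫ θ, f θ * g θ ∂muT = inner (𝕜 := ℝ) (hf.toLp f) (hg.toLp g) := by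
    rw [MeasureTheory.L2.inner_def]
    apply integral_congr_ae
    filter_upwards [hf.coeFn_toLp, hg.coeFn_toLp] with θ h1' h2'
    rw [h1', h2']
    simp [RCLike.inner_apply, mul_comm]
  rw [h1, ← norm_toLp_real hf, ← norm_toLp_real hg]
  exact real_inner_le_norm _ _

lemma integrable_mul_L2 {f g : ℝ → ℝ} (hf : MemLp f 2 muT) (hg : MemLp g 2 muT) :
    Integrable (fun θ => f θ * g θ) muT := by
  have h := MeasureTheory.L2.integrable_inner (𝕜 := ℝ) (hf.toLp f) (hg.toLp g)
  apply h.congr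
  filter_upwards [hf.coeFn_toLp, hg.coeFn_toLp] with θ h1 h2
  rw [h1, h2]
  simp [RCLike.inner_apply, mul_comm]

lemma normL2_triangle (A B C : ℝ → Matrix (Fin m) (Fin m) ℂ)
    (hA : MemLp (emb A) 2 muT) (hB : MemLp (emb B) 2 muT) (hC : MemLp (emb C) 2 muT) :
    normL2 (fun θ => A θ - C θ)
      ≤ normL2 (fun θ => A θ - B θ) + normL2 (fun θ => B θ - C θ) := by
  have hAC : MemLp (emb (fun θ => A θ - C θ)) 2 muT := by
    rw [emb_sub]; exact hA.sub hC
  have hAB : MemLp (emb (fun θ => A θ - B θ)) 2 muT := by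
    rw [emb_sub]; exact hA.sub hB
  have hBC : MemLp (emb (fun θ => B θ - C θ)) 2 muT := by
    rw [emb_sub]; exact hB.sub hC
  rw [normL2_eq_norm_toLp hAC, normL2_eq_norm_toLp hAB, normL2_eq_norm_toLp hBC]
  have eAC : hAC.toLp _ = hA.toLp (emb A) - hC.toLp (emb C) := by
    have h := MemLp.toLp_sub hA hC
    exact h
  have eAB : hAB.toLp _ = hA.toLp (emb A) - hB.toLp (emb B) := by
    have h := MemLp.toLp_sub hA hB
    exact h
  have eBC : hBC.toLp _ = hB.toLp (emb B) - hC.toLp (emb C) := by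
    have h := MemLp.toLp_sub hB hC
    exact h
  rw [eAC, eAB, eBC]
  exact norm_sub_le_norm_sub_add_norm_sub _ _ _

end L2Aux

section FinCS

lemma finCS {m : ℕ} (f g : Fin m → ℝ) :
    ∑ k, f k * g k ≤ Real.sqrt (∑ k, (f k)^2) * Real.sqrt (∑ k, (g k)^2) := by
  have h := Finset.sum_mul_sq_le_sq_mul_sq Finset.univ f g
  rcases le_or_gt (∑ k, f k * g k) 0 with hle | hlt
  · exact le_trans hle (mul_nonneg (Real.sqrt_nonneg _) (Real.sqrt_nonneg _))
  · calc ∑ k, f k * g k = Real.sqrt ((∑ k, f k * g k)^2) := (Real.sqrt_sq hlt.le).symm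
      _ ≤ Real.sqrt ((∑ k, (f k)^2) * ∑ k, (g k)^2) := Real.sqrt_le_sqrt h
      _ = Real.sqrt (∑ k, (f k)^2) * Real.sqrt (∑ k, (g k)^2) :=
          Real.sqrt_mul (Finset.sum_nonneg fun k _ => sq_nonneg _) _

lemma row_le_emb {m : ℕ} (W : ℝ → Matrix (Fin m) (Fin m) ℂ) (θ : ℝ) (i : Fin m) :
    Real.sqrt (∑ k, (‖W θ i k‖)^2) ≤ ‖emb W θ‖ := by
  have h : (∑ k, (‖W θ i k‖)^2) ≤ ‖emb W θ‖^2 := by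
    rw [EuclideanSpace.norm_eq, Real.sq_sqrt (by positivity), Fintype.sum_prod_type]
    have he : ∀ k, (‖W θ i k‖)^2 = ‖emb W θ (i,k)‖^2 := fun k => by
      rw [emb_apply]
    calc ∑ k, (‖W θ i k‖)^2 = ∑ k, ‖emb W θ (i,k)‖^2 := by simp [he]
      _ ≤ ∑ i', ∑ k, ‖emb W θ (i',k)‖^2 :=
          Finset.single_le_sum (f := fun i' => ∑ k, ‖emb W θ (i',k)‖^2)
            (fun i' _ => by positivity) (Finset.mem_univ i)
  calc Real.sqrt (∑ k, (‖W θ i k‖)^2) ≤ Real.sqrt (‖emb W θ‖^2) :=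
        Real.sqrt_le_sqrt h
    _ = ‖emb W θ‖ := Real.sqrt_sq (norm_nonneg _)

end FinCS

section Main

variable {m : ℕ}

lemma dH_bddBelow (Φ Ψ : ℝ → Matrix (Fin m) (Fin m) ℂ) :
    BddBelow {r : ℝ | ∃ WΦ WΨ, IsFactor WΦ Φ ∧ IsFactor WΨ Ψ ∧
      r = normL2 (fun θ => WΦ θ - WΨ θ)} := by
  refine ⟨0, fun r hr => ?_⟩
  obtain ⟨Wa, Wb, _, _, rfl⟩ := hr
  exact Real.sqrt_nonneg _

lemma dH_nonneg (Φ Ψ : ℝ → Matrix (Fin m) (Fin m) ℂ) : 0 ≤ dH Φ Ψ := by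
  apply Real.sInf_nonneg
  rintro r ⟨Wa, Wb, _, _, rfl⟩
  exact Real.sqrt_nonneg _

lemma dH_le {Φ Ψ Wa Wb : ℝ → Matrix (Fin m) (Fin m) ℂ}
    (ha : IsFactor Wa Φ) (hb : IsFactor Wb Ψ) :
    dH Φ Ψ ≤ normL2 (fun θ => Wa θ - Wb θ) :=
  csInf_le (dH_bddBelow Φ Ψ) ⟨Wa, Wb, ha, hb, rfl⟩

lemma dH_self {Φ : ℝ → Matrix (Fin m) (Fin m) ℂ} (hΦ : IsSpecDens Φ) : dH Φ Φ = 0 := by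
  obtain ⟨W, hW, _⟩ := exists_factor hΦ
  apply le_antisymm _ (dH_nonneg Φ Φ)
  have h0 : normL2 (fun θ => W θ - W θ) = 0 := by
    have he : (fun θ => W θ - W θ) = fun _ => (0 : Matrix (Fin m) (Fin m) ℂ) :=
      funext fun θ => sub_self _
    rw [he, normL2]
    simp
  calc dH Φ Φ ≤ normL2 (fun θ => W θ - W θ) := dH_le hW hW
    _ = 0 := h0

lemma normL2_sub_comm (Wa Wb : ℝ → Matrix (Fin m) (Fin m) ℂ) :
    normL2 (fun θ => Wa θ - Wb θ) = normL2 (fun θ => Wb θ - Wa θ) := by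
  rw [normL2, normL2]
  congr 1
  apply integral_congr_ae
  apply Filter.Eventually.of_forall
  intro θ
  show ((Wa θ - Wb θ) * (Wa θ - Wb θ)ᴴ).trace.re = ((Wb θ - Wa θ) * (Wb θ - Wa θ)ᴴ).trace.re
  have h : Wb θ - Wa θ = -(Wa θ - Wb θ) := (neg_sub _ _).symm
  rw [h, Matrix.conjTranspose_neg, Matrix.neg_mul, Matrix.mul_neg, neg_neg]

lemma dH_comm (Φ Ψ : ℝ → Matrix (Fin m) (Fin m) ℂ) : dH Φ Ψ = dH Ψ Φ := by
  rw [dH, dH]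
  congr 1
  ext r
  constructor
  · rintro ⟨Wa, Wb, ha, hb, rfl⟩
    exact ⟨Wb, Wa, hb, ha, normL2_sub_comm Wa Wb⟩
  · rintro ⟨Wa, Wb, ha, hb, rfl⟩
    exact ⟨Wb, Wa, hb, ha, normL2_sub_comm Wa Wb⟩

lemma dH_triangle {Φ Ψ Ξ : ℝ → Matrix (Fin m) (Fin m) ℂ}
    (hΦ : IsSpecDens Φ) (hΨ : IsSpecDens Ψ) (hΞ : IsSpecDens Ξ) :
    dH Φ Ξ ≤ dH Φ Ψ + dH Ψ Ξ := by
  classical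
  obtain ⟨Wφ0, hWφ0, _⟩ := exists_factor hΦ
  obtain ⟨Wψ0, hWψ0, _⟩ := exists_factor hΨ
  obtain ⟨Wξ0, hWξ0, _⟩ := exists_factor hΞ
  set S1 := {r : ℝ | ∃ WΦ WΨ, IsFactor WΦ Φ ∧ IsFactor WΨ Ψ ∧
      r = normL2 (fun θ => WΦ θ - WΨ θ)} with hS1
  set S2 := {r : ℝ | ∃ WΨ WΞ, IsFactor WΨ Ψ ∧ IsFactor WΞ Ξ ∧
      r = normL2 (fun θ => WΨ θ - WΞ θ)} with hS2
  have hS1ne : S1.Nonempty := ⟨_, Wφ0, Wψ0, hWφ0, hWψ0, rfl⟩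
  have hS2ne : S2.Nonempty := ⟨_, Wψ0, Wξ0, hWψ0, hWξ0, rfl⟩
  have key : ∀ r1 ∈ S1, ∀ r2 ∈ S2, dH Φ Ξ ≤ r1 + r2 := by
    rintro r1 ⟨WΦ, WΨ1, hWΦ, hWΨ1, rfl⟩ r2 ⟨WΨ2, WΞ, hWΨ2, hWΞ, rfl⟩
    set V : ℝ → Matrix (Fin m) (Fin m) ℂ := fun θ => (WΨ2 θ)⁻¹ * WΨ1 θ with hV
    set WT : ℝ → Matrix (Fin m) (Fin m) ℂ := fun θ => WΞ θ * V θ with hWT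
    have hVmeas : ∀ i j, Measurable fun θ => V θ i j := fun i j =>
      measurable_mul_entry (measurable_inv_entry hWΨ2.1) hWΨ1.1 i j
    have hWTmeas : ∀ i j, Measurable fun θ => WT θ i j := fun i j =>
      measurable_mul_entry hWΞ.1 hVmeas i j
    have hae : ∀ᵐ θ ∂muT,
        (V θ) * (V θ)ᴴ = 1 ∧ WΨ2 θ * V θ = WΨ1 θ ∧ WT θ * (WT θ)ᴴ = Ξ θ := by
      filter_upwards [hWΨ1.2.2, hWΨ2.2.2, hWΞ.2.2] with θ h1 h2 h3
      have hdet : IsUnit (WΨ2 θ).det := by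
        have hdP : (Ψ θ).det ≠ 0 := (specDens_posDef hΨ θ).det_pos.ne'
        have hmul : (WΨ2 θ).det * star (WΨ2 θ).det = (Ψ θ).det := by
          rw [← h2, Matrix.det_mul, Matrix.det_conjTranspose]
        rw [isUnit_iff_ne_zero]
        intro hzero
        apply hdP
        rw [← hmul, hzero, zero_mul]
      have hconj : ((WΨ2 θ)⁻¹)ᴴ = ((WΨ2 θ)ᴴ)⁻¹ := Matrix.conjTranspose_nonsing_inv (WΨ2 θ)
      have hdetH : IsUnit ((WΨ2 θ)ᴴ).det := by
        rw [Matrix.det_conjTranspose]; exact hdet.star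
      have hVV : (V θ) * (V θ)ᴴ = 1 := by
        calc V θ * (V θ)ᴴ
            = (WΨ2 θ)⁻¹ * WΨ1 θ * ((WΨ1 θ)ᴴ * ((WΨ2 θ)⁻¹)ᴴ) := by
              rw [hV, Matrix.conjTranspose_mul]
          _ = (WΨ2 θ)⁻¹ * (WΨ1 θ * (WΨ1 θ)ᴴ) * ((WΨ2 θ)ᴴ)⁻¹ := by
              rw [hconj]; simp only [Matrix.mul_assoc]
          _ = (WΨ2 θ)⁻¹ * (Ψ θ) * ((WΨ2 θ)ᴴ)⁻¹ := by rw [h1]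
          _ = (WΨ2 θ)⁻¹ * (WΨ2 θ * (WΨ2 θ)ᴴ) * ((WΨ2 θ)ᴴ)⁻¹ := by rw [h2]
          _ = ((WΨ2 θ)⁻¹ * WΨ2 θ) * ((WΨ2 θ)ᴴ * ((WΨ2 θ)ᴴ)⁻¹) := by
              simp only [Matrix.mul_assoc]
          _ = 1 := by
              rw [Matrix.nonsing_inv_mul _ hdet, Matrix.mul_nonsing_inv _ hdetH, one_mul]
      have hV2 : WΨ2 θ * V θ = WΨ1 θ := by
        rw [hV, ← Matrix.mul_assoc, Matrix.mul_nonsing_inv _ hdet, Matrix.one_mul]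
      refine ⟨hVV, hV2, ?_⟩
      calc WT θ * (WT θ)ᴴ
          = WΞ θ * ((V θ) * (V θ)ᴴ) * (WΞ θ)ᴴ := by
            rw [hWT, Matrix.conjTranspose_mul]; simp only [Matrix.mul_assoc]
        _ = Ξ θ := by rw [hVV, Matrix.mul_one]; exact h3
    have hWTint : Integrable (fun θ => (WT θ * (WT θ)ᴴ).trace.re) muT := by
      apply (trace_re_integrable hΞ).congr
      filter_upwards [hae] with θ hθ
      rw [hθ.2.2]
    have hWTfac : IsFactor WT Ξ :=
      ⟨hWTmeas, hWTint, by filter_upwards [hae] with θ hθ; exact hθ.2.2⟩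
    have hnorm_eq : normL2 (fun θ => WΨ1 θ - WT θ) = normL2 (fun θ => WΨ2 θ - WΞ θ) := by
      rw [normL2, normL2]
      congr 1
      apply integral_congr_ae
      filter_upwards [hae] with θ hθ
      have hdiff : WΨ1 θ - WT θ = (WΨ2 θ - WΞ θ) * V θ := by
        rw [Matrix.sub_mul, hθ.2.1]
      rw [hdiff, Matrix.conjTranspose_mul]
      have hassoc : (WΨ2 θ - WΞ θ) * V θ * ((V θ)ᴴ * (WΨ2 θ - WΞ θ)ᴴ)
          = (WΨ2 θ - WΞ θ) * ((V θ) * (V θ)ᴴ) * (WΨ2 θ - WΞ θ)ᴴ := by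
        simp only [Matrix.mul_assoc]
      rw [hassoc, hθ.1, Matrix.mul_one]
    have h1 : MemLp (emb WΦ) 2 muT := memLp_emb_factor hWΦ
    have h2 : MemLp (emb WΨ1) 2 muT := memLp_emb_factor hWΨ1
    have h3 : MemLp (emb WT) 2 muT := memLp_emb_factor hWTfac
    calc dH Φ Ξ ≤ normL2 (fun θ => WΦ θ - WT θ) := dH_le hWΦ hWTfac
      _ ≤ normL2 (fun θ => WΦ θ - WΨ1 θ) + normL2 (fun θ => WΨ1 θ - WT θ) :=
          normL2_triangle _ _ _ h1 h2 h3
      _ = normL2 (fun θ => WΦ θ - WΨ1 θ) + normL2 (fun θ => WΨ2 θ - WΞ θ) := by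
          rw [hnorm_eq]
  have step1 : ∀ r1 ∈ S1, dH Φ Ξ - r1 ≤ dH Ψ Ξ := by
    intro r1 h1
    apply le_csInf hS2ne
    intro r2 h2
    linarith [key r1 h1 r2 h2]
  have step2 : dH Φ Ξ - dH Ψ Ξ ≤ dH Φ Ψ := by
    apply le_csInf hS1ne
    intro r1 h1
    linarith [step1 r1 h1]
  linarith

lemma dH_eq_zero_ae {Φ Ψ : ℝ → Matrix (Fin m) (Fin m) ℂ}
    (hΦ : IsSpecDens Φ) (hΨ : IsSpecDens Ψ) (h0 : dH Φ Ψ = 0) : Φ =ᵐ[muT] Ψ := by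
  obtain ⟨C1, hC1⟩ := hΦ.2.2.2.1
  obtain ⟨C2, hC2⟩ := hΨ.2.2.2.1
  set KΦ := Real.sqrt (∫ θ, (Φ θ).trace.re ∂muT) with hKΦ
  set KΨ := Real.sqrt (∫ θ, (Ψ θ).trace.re ∂muT) with hKΨ
  have hKΦ0 : 0 ≤ KΦ := Real.sqrt_nonneg _
  have hKΨ0 : 0 ≤ KΨ := Real.sqrt_nonneg _
  obtain ⟨Wφ0, hWφ0, _⟩ := exists_factor hΦ
  obtain ⟨Wψ0, hWψ0, _⟩ := exists_factor hΨ
  have hSne : Set.Nonempty {r : ℝ | ∃ WΦ WΨ, IsFactor WΦ Φ ∧ IsFactor WΨ Ψ ∧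
      r = normL2 (fun θ => WΦ θ - WΨ θ)} := ⟨_, Wφ0, Wψ0, hWφ0, hWψ0, rfl⟩
  have hmain : ∀ i j, ∀ᵐ θ ∂muT, Φ θ i j = Ψ θ i j := by
    intro i j
    set g : ℝ → ℝ := fun θ => ‖Φ θ i j - Ψ θ i j‖ with hgdef
    have hgmeas : Measurable g :=
      continuous_norm.measurable.comp ((hΦ.1 i j).sub (hΨ.1 i j))
    have hgnn : ∀ θ, 0 ≤ g θ := fun θ => norm_nonneg _
    have hgint : Integrable g muT := by
      apply integrable_of_bounded hgmeas (C := C1 + C2)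
      intro θ
      rw [abs_of_nonneg (hgnn θ)]
      calc ‖Φ θ i j - Ψ θ i j‖
          ≤ ‖Φ θ i j‖ + ‖Ψ θ i j‖ := by
            exact norm_sub_le (Φ θ i j) (Ψ θ i j)
        _ ≤ C1 + C2 := add_le_add (hC1 θ i j) (hC2 θ i j)
    have hbound : ∀ ε > 0, ∫ θ, g θ ∂muT ≤ ε * (KΦ + KΨ) := by
      intro ε hε
      have hlt : dH Φ Ψ < ε := by rw [h0]; exact hε
      obtain ⟨r, hrS, hrlt⟩ := exists_lt_of_csInf_lt hSne hlt
      obtain ⟨WΦ, WΨ', hWΦ, hWΨ', hr⟩ := hrS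
      set D : ℝ → Matrix (Fin m) (Fin m) ℂ := fun θ => WΦ θ - WΨ' θ with hD
      have hDme : MemLp (emb D) 2 muT := by
        rw [hD, emb_sub]
        exact (memLp_emb_factor hWΦ).sub (memLp_emb_factor hWΨ')
      set u : ℝ → ℝ := fun θ => ‖emb D θ‖ with hu_def
      set a : ℝ → ℝ := fun θ => ‖emb WΦ θ‖ with ha_def
      set b : ℝ → ℝ := fun θ => ‖emb WΨ' θ‖ with hb_def
      have hu : MemLp u 2 muT := hDme.norm
      have ha : MemLp a 2 muT := (memLp_emb_factor hWΦ).norm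
      have hb : MemLp b 2 muT := (memLp_emb_factor hWΨ').norm
      have hterm1 : ∀ θ, ‖(D θ * (WΦ θ)ᴴ) i j‖ ≤ u θ * a θ := by
        intro θ
        rw [Matrix.mul_apply]
        calc ‖∑ k, D θ i k * (WΦ θ)ᴴ k j‖
            ≤ ∑ k, ‖D θ i k * (WΦ θ)ᴴ k j‖ := norm_sum_le _ _
          _ = ∑ k, ‖D θ i k‖ * ‖WΦ θ j k‖ := by
              simp [norm_mul, Matrix.conjTranspose_apply, RCLike.star_def, Complex.norm_conj]
          _ ≤ Real.sqrt (∑ k, (‖D θ i k‖)^2)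
                * Real.sqrt (∑ k, (‖WΦ θ j k‖)^2) := finCS _ _
          _ ≤ u θ * a θ := by
              apply mul_le_mul (row_le_emb D θ i) (row_le_emb WΦ θ j)
                (Real.sqrt_nonneg _) (norm_nonneg _)
      have hterm2 : ∀ θ, ‖(WΨ' θ * (D θ)ᴴ) i j‖ ≤ b θ * u θ := by
        intro θ
        rw [Matrix.mul_apply]
        calc ‖∑ k, WΨ' θ i k * (D θ)ᴴ k j‖
            ≤ ∑ k, ‖WΨ' θ i k * (D θ)ᴴ k j‖ := norm_sum_le _ _
          _ = ∑ k, ‖WΨ' θ i k‖ * ‖D θ j k‖ := by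
              simp [norm_mul, Matrix.conjTranspose_apply, RCLike.star_def, Complex.norm_conj]
          _ ≤ Real.sqrt (∑ k, (‖WΨ' θ i k‖)^2)
                * Real.sqrt (∑ k, (‖D θ j k‖)^2) := finCS _ _
          _ ≤ b θ * u θ := by
              apply mul_le_mul (row_le_emb WΨ' θ i) (row_le_emb D θ j)
                (Real.sqrt_nonneg _) (norm_nonneg _)
      have hptwise : ∀ᵐ θ ∂muT, g θ ≤ u θ * a θ + u θ * b θ := by
        filter_upwards [hWΦ.2.2, hWΨ'.2.2] with θ e1 e2
        have hid : Φ θ - Ψ θ = D θ * (WΦ θ)ᴴ + WΨ' θ * (D θ)ᴴ := by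
          rw [← e1, ← e2, hD]
          rw [Matrix.sub_mul, Matrix.conjTranspose_sub, Matrix.mul_sub]
          abel
        have hentry : Φ θ i j - Ψ θ i j = (D θ * (WΦ θ)ᴴ) i j + (WΨ' θ * (D θ)ᴴ) i j := by
          have hc := congrArg (fun M => M i j) hid
          simpa [Matrix.sub_apply, Matrix.add_apply] using hc
        calc g θ = ‖Φ θ i j - Ψ θ i j‖ := rfl
          _ = ‖(D θ * (WΦ θ)ᴴ) i j + (WΨ' θ * (D θ)ᴴ) i j‖ := by rw [hentry]
          _ ≤ ‖(D θ * (WΦ θ)ᴴ) i j‖ + ‖(WΨ' θ * (D θ)ᴴ) i j‖ :=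
              norm_add_le _ _
          _ ≤ u θ * a θ + u θ * b θ := by
              have := hterm1 θ
              have h2 := hterm2 θ
              rw [mul_comm (b θ) (u θ)] at h2
              linarith
      have hua : Integrable (fun θ => u θ * a θ) muT := integrable_mul_L2 hu ha
      have hub : Integrable (fun θ => u θ * b θ) muT := integrable_mul_L2 hu hb
      have hu2 : Real.sqrt (∫ θ, (u θ)^2 ∂muT) = normL2 D := by
        rw [normL2]
        congr 1
        exact integral_congr_ae (Filter.Eventually.of_forall fun θ => norm_emb_sq D θ)
      have ha2 : Real.sqrt (∫ θ, (a θ)^2 ∂muT) = KΦ := by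
        rw [hKΦ]
        congr 1
        apply integral_congr_ae
        filter_upwards [hWΦ.2.2] with θ e1
        show ‖emb WΦ θ‖^2 = (Φ θ).trace.re
        rw [norm_emb_sq, e1]
      have hb2 : Real.sqrt (∫ θ, (b θ)^2 ∂muT) = KΨ := by
        rw [hKΨ]
        congr 1
        apply integral_congr_ae
        filter_upwards [hWΨ'.2.2] with θ e2
        show ‖emb WΨ' θ‖^2 = (Ψ θ).trace.re
        rw [norm_emb_sq, e2]
      have hrD : normL2 D < ε := by
        rw [hD, ← hr]
        exact hrlt
      have hD0 : 0 ≤ normL2 D := Real.sqrt_nonneg _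
      calc ∫ θ, g θ ∂muT
          ≤ ∫ θ, (u θ * a θ + u θ * b θ) ∂muT :=
            integral_mono_ae hgint (hua.add hub) hptwise
        _ = (∫ θ, u θ * a θ ∂muT) + ∫ θ, u θ * b θ ∂muT := integral_add hua hub
        _ ≤ Real.sqrt (∫ θ, (u θ)^2 ∂muT) * Real.sqrt (∫ θ, (a θ)^2 ∂muT)
              + Real.sqrt (∫ θ, (u θ)^2 ∂muT) * Real.sqrt (∫ θ, (b θ)^2 ∂muT) :=
            add_le_add (integral_mul_le_CS hu ha) (integral_mul_le_CS hu hb)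
        _ = normL2 D * (KΦ + KΨ) := by rw [hu2, ha2, hb2]; ring
        _ ≤ ε * (KΦ + KΨ) :=
            mul_le_mul_of_nonneg_right hrD.le (by linarith)
    have hint0 : ∫ θ, g θ ∂muT ≤ 0 := by
      by_contra hcon
      push_neg at hcon
      set I := ∫ θ, g θ ∂muT with hI
      have hb := hbound (I / (KΦ + KΨ + 1)) (by positivity)
      have hlt : (I / (KΦ + KΨ + 1)) * (KΦ + KΨ) < I := by
        rw [div_mul_eq_mul_div, div_lt_iff₀ (by linarith)]
        nlinarith
      linarith
    have hIzero : ∫ θ, g θ ∂muT = 0 := le_antisymm hint0 (integral_nonneg hgnn)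
    have hg0 : g =ᵐ[muT] 0 := (integral_eq_zero_iff_of_nonneg hgnn hgint).mp hIzero
    filter_upwards [hg0] with θ hθ
    have habs : ‖Φ θ i j - Ψ θ i j‖ = 0 := hθ
    have hsub := norm_eq_zero.mp habs
    exact sub_eq_zero.mp hsub
  have hall : ∀ᵐ θ ∂muT, ∀ i j, Φ θ i j = Ψ θ i j := by
    rw [MeasureTheory.ae_all_iff]
    intro i
    rw [MeasureTheory.ae_all_iff]
    exact hmain i
  filter_upwards [hall] with θ hθ
  exact Matrix.ext fun i j => hθ i j

end Main

theorem stmt_10 {m : ℕ} (Φ Ψ Ξ : ℝ → Matrix (Fin m) (Fin m) ℂ)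
    (hΦ : IsSpecDens Φ) (hΨ : IsSpecDens Ψ) (hΞ : IsSpecDens Ξ) :
    0 ≤ dH Φ Ψ ∧ dH Φ Φ = 0 ∧ (dH Φ Ψ = 0 → Φ =ᵐ[muT] Ψ) ∧
      dH Φ Ψ = dH Ψ Φ ∧ dH Φ Ξ ≤ dH Φ Ψ + dH Ψ Ξ :=
  ⟨dH_nonneg Φ Ψ, dH_self hΦ, fun h => dH_eq_zero_ae hΦ hΨ h, dH_comm Φ Ψ,
    dH_triangle hΦ hΨ hΞ⟩
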